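/- Let c : ℕ → ℝ be defined by c(n) = 0 for n ≤ 3 and, for n ≥ 4, c(n) = c(⌊n/2⌋) + c(⌊n/2⌋ − 1) + (3/2)·n + (1/2)·(n mod 2). Then for every ε > 0 there exists N such that for all n ≥ N, c(n) ≥ (3/2 − ε)·n·log₂ n. (This function c(n) is the merge cost of Timsort on the worst-case run-length sequence R_tim(n), so Timsort's worst-case merge cost on inputs of length n is at least (1.5 − o(1))·n·log₂ n.) -/

import Mathlib

open Real

private lemma log_ge (x : ℝ) (hx : 0 < x) : 1 - 1/x ≤ Real.log x := by
  have h := Real.log_le_sub_one_of_pos (x := x⁻¹) (by positivity)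
  rw [Real.log_inv] at h
  have : (1:ℝ)/x = x⁻¹ := one_div x
  linarith

private lemma c_nonneg (c : ℕ → ℝ)
    (h0 : ∀ n ≤ 3, c n = 0)
    (hrec : ∀ n, 4 ≤ n →
      c n = c (n / 2) + c (n / 2 - 1) + 3 / 2 * (n : ℝ) + 1 / 2 * ((n % 2 : ℕ) : ℝ)) :
    ∀ n, 0 ≤ c n := by
  intro n
  induction n using Nat.strong_induction_on with
  | _ n ih =>
    by_cases h : n ≤ 3
    · rw [h0 n h]
    · push_neg at h
      have h4 : 4 ≤ n := h
      rw [hrec n h4]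
      have h1 : 0 ≤ c (n / 2) := ih _ (by omega)
      have h2 : 0 ≤ c (n / 2 - 1) := ih _ (by omega)
      have h3 : (0:ℝ) ≤ (n:ℝ) := Nat.cast_nonneg n
      have h5 : (0:ℝ) ≤ ((n % 2 : ℕ) : ℝ) := Nat.cast_nonneg _
      linarith

set_option maxHeartbeats 1000000 in
private lemma key (c : ℕ → ℝ)
    (h0 : ∀ n ≤ 3, c n = 0)
    (hrec : ∀ n, 4 ≤ n →
      c n = c (n / 2) + c (n / 2 - 1) + 3 / 2 * (n : ℝ) + 1 / 2 * ((n % 2 : ℕ) : ℝ)) :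
    ∀ n : ℕ, 3/2 * (n:ℝ) * Real.logb 2 n - 200 * n + (Real.logb 2 n)^2 ≤ c n := by
  intro n
  induction n using Nat.strong_induction_on with
  | _ n ih =>
    by_cases hsmall : n < 4096
    · -- RHS nonpositive
      have hcn : 0 ≤ c n := c_nonneg c h0 hrec n
      rcases Nat.eq_zero_or_pos n with h0' | h1
      · subst h0'; simpa [Real.logb_zero] using hcn
      · have hn1 : (1:ℝ) ≤ (n:ℝ) := by exact_mod_cast h1
        have hL0 : 0 ≤ Real.logb 2 n := Real.logb_nonneg one_lt_two hn1
        have hL12 : Real.logb 2 n ≤ 12 := by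
          have h1 : Real.logb 2 n ≤ Real.logb 2 4096 :=
            Real.logb_le_logb_of_le one_lt_two (by linarith) (by exact_mod_cast hsmall.le)
          have h2 : Real.logb 2 4096 = 12 := by
            have : (4096:ℝ) = 2 ^ (12:ℝ) := by norm_num
            rw [this, Real.logb_rpow (by norm_num) (by norm_num)]
          linarith [h1, h2.le, h2.ge]
        nlinarith [mul_le_mul_of_nonneg_right hn1 hL0, sq_nonneg (Real.logb 2 n)]
    · push_neg at hsmall
      have h4 : 4 ≤ n := by omega
      have hnat : 2 * (n / 2) + n % 2 = n := by omega
      have hmod : n % 2 ≤ 1 := by omega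
      have hmn : n / 2 < n := by omega
      have hm1n : n / 2 - 1 < n := by omega
      have ihA := ih (n / 2) hmn
      have ihB := ih (n / 2 - 1) hm1n
      have hcast : ((n / 2 - 1 : ℕ) : ℝ) = ((n / 2 : ℕ):ℝ) - 1 := by
        have : 1 ≤ n / 2 := by omega
        push_cast [Nat.cast_sub this]; ring
      rw [hcast] at ihB
      obtain ⟨mr, hmr⟩ : ∃ mr : ℝ, mr = ((n / 2 : ℕ) : ℝ) := ⟨_, rfl⟩
      rw [← hmr] at ihA ihB hcast
      -- real versions
      have hnR : (4096:ℝ) ≤ (n:ℝ) := by exact_mod_cast hsmall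
      have hnpos : (0:ℝ) < (n:ℝ) := by linarith
      have hnne : (n:ℝ) ≠ 0 := ne_of_gt hnpos
      have hmR : ((n:ℝ) - 1)/2 ≤ mr := by
        have h' : (2*(((n/2 : ℕ)):ℝ) + ((n%2 : ℕ):ℝ)) = (n:ℝ) := by exact_mod_cast hnat
        have h'' : ((n%2 : ℕ):ℝ) ≤ 1 := by exact_mod_cast hmod
        rw [hmr]; linarith
      have hmR' : mr ≤ (n:ℝ)/2 := by
        have h' : (2*(((n/2 : ℕ)):ℝ) + ((n%2 : ℕ):ℝ)) = (n:ℝ) := by exact_mod_cast hnat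
        have h'' : (0:ℝ) ≤ ((n%2 : ℕ):ℝ) := Nat.cast_nonneg _
        rw [hmr]; linarith
      obtain ⟨L, hL⟩ : ∃ L : ℝ, L = Real.logb 2 n := ⟨_, rfl⟩
      obtain ⟨A, hAdef⟩ : ∃ A : ℝ, A = Real.logb 2 mr := ⟨_, rfl⟩
      obtain ⟨B, hBdef⟩ : ∃ B : ℝ, B = Real.logb 2 (mr - 1) := ⟨_, rfl⟩
      rw [← hAdef] at ihA
      rw [← hBdef] at ihB
      -- L ≥ 12
      have hL12 : 12 ≤ L := by
        have h2 : Real.logb 2 4096 = 12 := by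
          have : (4096:ℝ) = 2 ^ (12:ℝ) := by norm_num
          rw [this, Real.logb_rpow (by norm_num) (by norm_num)]
        have := Real.logb_le_logb_of_le one_lt_two (by norm_num : (0:ℝ) < 4096) hnR
        rw [hL]; linarith
      -- L ≤ 2n
      have hlog2 : (0.6931471803 : ℝ) < Real.log 2 := Real.log_two_gt_d9
      have hLn : L ≤ 2 * (n:ℝ) := by
        have hlogn : Real.log n ≤ (n:ℝ) - 1 := Real.log_le_sub_one_of_pos (by linarith)
        have hLeq : L = Real.log n / Real.log 2 := hL
        rw [hLeq, div_le_iff₀ (by linarith)]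
        nlinarith
      -- lower bound on logb of children
      have hkey : L - 1 - 12/(n:ℝ) ≤ Real.logb 2 (((n:ℝ) - 3)/2) := by
        have hpos : (0:ℝ) < ((n:ℝ) - 3) := by linarith
        have e1 : Real.logb 2 (((n:ℝ) - 3)/2) = Real.logb 2 ((n:ℝ)-3) - 1 := by
          rw [Real.logb_div (by linarith) (by norm_num), Real.logb_self_eq_one (by norm_num)]
        have e2 : Real.logb 2 ((n:ℝ)-3) = Real.logb 2 n + Real.log (((n:ℝ)-3)/(n:ℝ)) / Real.log 2 := by
          unfold Real.logb
          rw [Real.log_div (by linarith) hnne]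
          ring
        have e3 : 1 - (n:ℝ)/((n:ℝ)-3) ≤ Real.log (((n:ℝ)-3)/(n:ℝ)) := by
          have h5 := log_ge (((n:ℝ)-3)/(n:ℝ)) (by positivity)
          have h6 : (1:ℝ) / (((n:ℝ)-3)/(n:ℝ)) = (n:ℝ)/((n:ℝ)-3) := by
            rw [one_div_div]
          linarith
        have e4 : -(12 * Real.log 2 / (n:ℝ)) ≤ 1 - (n:ℝ)/((n:ℝ)-3) := by
          have h1 : 1 - (n:ℝ)/((n:ℝ)-3) = -(3/((n:ℝ)-3)) := by
            field_simp
            ring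
          rw [h1, neg_le_neg_iff, div_le_div_iff₀ (by linarith : (0:ℝ) < (n:ℝ)-3) hnpos]
          nlinarith
        have hlog2pos : (0:ℝ) < Real.log 2 := by linarith
        have e5 : -(12/(n:ℝ)) ≤ Real.log (((n:ℝ)-3)/(n:ℝ)) / Real.log 2 := by
          rw [le_div_iff₀ hlog2pos]
          have h7 : -(12/(n:ℝ)) * Real.log 2 = -(12 * Real.log 2 / (n:ℝ)) := by ring
          rw [h7]
          linarith
        rw [e1, e2, ← hL]
        linarith
      obtain ⟨t, ht⟩ : ∃ t : ℝ, t = 12/(n:ℝ) := ⟨_, rfl⟩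
      have htpos : 0 < t := by rw [ht]; positivity
      have hA : L - 1 - t ≤ A := by
        have hmono : Real.logb 2 (((n:ℝ)-3)/2) ≤ Real.logb 2 mr :=
          Real.logb_le_logb_of_le one_lt_two (by linarith) (by linarith)
        rw [hAdef, ht]; linarith
      have hB : L - 1 - t ≤ B := by
        have hmono : Real.logb 2 (((n:ℝ)-3)/2) ≤ Real.logb 2 (mr-1) :=
          Real.logb_le_logb_of_le one_lt_two (by linarith) (by linarith)
        rw [hBdef, ht]; linarith
      obtain ⟨D, hD⟩ : ∃ D : ℝ, D = L - 1 - t := ⟨_, rfl⟩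
      rw [← hD] at hA hB
      have ht1 : t ≤ 1 := by
        rw [ht, div_le_one hnpos]; linarith
      have hDpos : (0:ℝ) < D := by rw [hD]; linarith
      have hA2 : D^2 ≤ A^2 := pow_le_pow_left₀ hDpos.le hA 2
      have hB2 : D^2 ≤ B^2 := pow_le_pow_left₀ hDpos.le hB 2
      have hmpos : (0:ℝ) < mr := by linarith
      have hmApos : 3/2 * mr * D ≤ 3/2 * mr * A :=
        mul_le_mul_of_nonneg_left hA (by positivity)
      have hmBpos : 3/2 * (mr-1) * D ≤ 3/2 * (mr-1) * B :=
        mul_le_mul_of_nonneg_left hB (by nlinarith)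
      have hmD1 : 3/2 * (((n:ℝ)-2)/2) * D ≤ 3/2 * mr * D := by nlinarith
      have hmD2 : 3/2 * (((n:ℝ)-4)/2) * D ≤ 3/2 * (mr-1) * D := by nlinarith
      have hm200 : -200 * mr - 200 * (mr - 1) ≥ -200*((n:ℝ)-1) := by nlinarith
      have hDn : D * (n:ℝ) = L * (n:ℝ) - (n:ℝ) - 12 := by
        have h12 : 12/(n:ℝ) * (n:ℝ) = 12 := div_mul_cancel₀ _ hnne
        rw [hD, ht]; nlinarith [h12]
      have hLt : L * t ≤ 24 := by
        have h1 : L * (12/(n:ℝ)) ≤ 2*(n:ℝ) * (12/(n:ℝ)) :=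
          mul_le_mul_of_nonneg_right hLn (by positivity)
        have h2 : 2*(n:ℝ) * (12/(n:ℝ)) = 24 := by
          rw [show 2*(n:ℝ)*(12/(n:ℝ)) = 24*((n:ℝ)/(n:ℝ)) from by ring, div_self hnne, mul_one]
        rw [ht]; linarith
      -- pure algebra
      have hfin : 3/2*(((n:ℝ)-2)/2)*D + 3/2*(((n:ℝ)-4)/2)*D + 2*D^2 - 200*((n:ℝ)-1)
          + 3/2*(n:ℝ) - (3/2*(n:ℝ)*L - 200*(n:ℝ) + L^2) = 2*D^2 - 9/2*D + 182 - L^2 := by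
        linear_combination (3/2) * hDn
      have hpos2 : 0 ≤ 2*D^2 - 9/2*D + 182 - L^2 := by
        nlinarith [sq_nonneg (L - 12), sq_nonneg t, hLt, hD, hL12, htpos]
      have hrecn := hrec n h4
      have hmodR : (0:ℝ) ≤ ((n % 2 : ℕ):ℝ) := Nat.cast_nonneg _
      rw [hrecn, ← hL]
      linarith

theorem timsort_lower_bound (c : ℕ → ℝ)
    (h0 : ∀ n ≤ 3, c n = 0)
    (hrec : ∀ n, 4 ≤ n →
      c n = c (n / 2) + c (n / 2 - 1) + 3 / 2 * (n : ℝ) + 1 / 2 * ((n % 2 : ℕ) : ℝ)) :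
    ∀ ε > (0 : ℝ), ∃ N : ℕ, ∀ n ≥ N, (3 / 2 - ε) * (n : ℝ) * Real.logb 2 n ≤ c n := by
  intro ε hε
  refine ⟨max 4096 (⌈(2:ℝ) ^ (200/ε)⌉₊ + 1), fun n hn => ?_⟩
  have hn1 : 4096 ≤ n := le_trans (le_max_left _ _) hn
  have hn2 : (2:ℝ) ^ (200/ε) ≤ (n:ℝ) := by
    have h1 : ⌈(2:ℝ) ^ (200/ε)⌉₊ ≤ n := by
      have := le_trans (le_max_right 4096 (⌈(2:ℝ) ^ (200/ε)⌉₊ + 1)) hn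
      omega
    calc (2:ℝ) ^ (200/ε) ≤ (⌈(2:ℝ) ^ (200/ε)⌉₊ : ℝ) := Nat.le_ceil _
      _ ≤ (n:ℝ) := by exact_mod_cast h1
  have hnpos : (0:ℝ) < (n:ℝ) := by
    have : (1:ℕ) ≤ n := by omega
    exact_mod_cast Nat.lt_of_lt_of_le Nat.zero_lt_one this
  have hLge : 200/ε ≤ Real.logb 2 n :=
    (Real.le_logb_iff_rpow_le one_lt_two hnpos).mpr hn2
  have hkey := key c h0 hrec n
  obtain ⟨L, hL⟩ : ∃ L : ℝ, L = Real.logb 2 n := ⟨_, rfl⟩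
  rw [← hL] at hLge hkey ⊢
  have hεL : 200 * (n:ℝ) ≤ ε * ((n:ℝ) * L) := by
    have h1 : 200 ≤ ε * L := by
      rw [div_le_iff₀ hε] at hLge; linarith [hLge]
    nlinarith
  have hL0 : 0 ≤ L := by
    rw [hL]
    exact Real.logb_nonneg one_lt_two (by exact_mod_cast Nat.one_le_iff_ne_zero.mpr (by omega) : (1:ℝ) ≤ (n:ℝ))
  nlinarith [sq_nonneg L]
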